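/- Let n ∈ ℕ and let R, U, H : ℝ → Matrix (Fin n) (Fin n) ℝ be differentiable matrix-valued functions such that for every t, R(t) is orthogonal (R(t)·R(t)ᵀ = 1) and U(t) is invertible. Define F := fun t => R(t)·U(t), the velocity gradient ℓ(t) := F'(t)·F(t)⁻¹, the Lagrangian rate r(t) := U'(t)·U(t)⁻¹, and h(t) := R(t)·H(t)·R(t)ᵀ. Then for every t: h'(t) − h(t)·ℓ(t)ᵀ − ℓ(t)·h(t) = R(t)·(H'(t) − H(t)·r(t)ᵀ − r(t)·H(t))·R(t)ᵀ (the upper Oldroyd rates of h and H are objective counterparts of each other). -/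

import Mathlib

open Matrix

noncomputable def matDeriv {n : ℕ} (A : ℝ → Matrix (Fin n) (Fin n) ℝ) (t : ℝ) :
    Matrix (Fin n) (Fin n) ℝ :=
  Matrix.of fun i j => deriv (fun s => A s i j) t

lemma matDeriv_mul {n : ℕ} (A B : ℝ → Matrix (Fin n) (Fin n) ℝ) (t : ℝ)
    (hA : ∀ i j, DifferentiableAt ℝ (fun s => A s i j) t)
    (hB : ∀ i j, DifferentiableAt ℝ (fun s => B s i j) t) :
    matDeriv (fun s => A s * B s) t = matDeriv A t * B t + A t * matDeriv B t := by
  ext i j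
  have h1 : (fun s => (A s * B s) i j) = fun s => ∑ k, A s i k * B s k j := by
    funext s; simp [Matrix.mul_apply]
  simp only [matDeriv, Matrix.of_apply, Matrix.add_apply, Matrix.mul_apply, h1]
  rw [deriv_fun_sum (fun k _ => ((hA i k).fun_mul (hB k j)))]
  rw [← Finset.sum_add_distrib]
  exact Finset.sum_congr rfl fun k _ => by rw [deriv_fun_mul (hA i k) (hB k j)]

lemma matDeriv_transpose {n : ℕ} (A : ℝ → Matrix (Fin n) (Fin n) ℝ) (t : ℝ) :
    matDeriv (fun s => (A s)ᵀ) t = (matDeriv A t)ᵀ := by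
  ext i j; simp [matDeriv]

lemma key_alg {n : ℕ} (Rt A Ut B Ht C V : Matrix (Fin n) (Fin n) ℝ)
    (hRo : Rtᵀ * Rt = 1) (hU1 : Ut * V = 1) :
    (A * Ht * Rtᵀ + (Rt * C * Rtᵀ + Rt * Ht * Aᵀ))
      - Rt * Ht * Rtᵀ * ((A * Ut + Rt * B) * (V * Rtᵀ))ᵀ
      - (A * Ut + Rt * B) * (V * Rtᵀ) * (Rt * Ht * Rtᵀ) =
    Rt * (C - Ht * (B * V)ᵀ - (B * V) * Ht) * Rtᵀ := by
  have e1 : ∀ X : Matrix (Fin n) (Fin n) ℝ, Rtᵀ * (Rt * X) = X := fun X => by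
    rw [← mul_assoc, hRo, one_mul]
  have e2 : ∀ X : Matrix (Fin n) (Fin n) ℝ, Ut * (V * X) = X := fun X => by
    rw [← mul_assoc, hU1, one_mul]
  have e3 : ∀ X : Matrix (Fin n) (Fin n) ℝ, Vᵀ * (Utᵀ * X) = X := fun X => by
    rw [← mul_assoc, ← transpose_mul, hU1, transpose_one, one_mul]
  simp only [transpose_mul, Matrix.transpose_transpose, Matrix.transpose_add, Matrix.mul_add, Matrix.add_mul, Matrix.mul_sub,
    Matrix.sub_mul, Matrix.mul_assoc, e1, e2, e3]
  abel

theorem upper_oldroyd_objective_counterpart {n : ℕ}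
    (R U H : ℝ → Matrix (Fin n) (Fin n) ℝ)
    (hR : ∀ t, ∀ i j, DifferentiableAt ℝ (fun s => R s i j) t)
    (hU : ∀ t, ∀ i j, DifferentiableAt ℝ (fun s => U s i j) t)
    (hH : ∀ t, ∀ i j, DifferentiableAt ℝ (fun s => H s i j) t)
    (horth : ∀ t, R t * (R t)ᵀ = 1)
    (hinv : ∀ t, IsUnit (U t)) :
    ∀ t : ℝ,
      let F : ℝ → Matrix (Fin n) (Fin n) ℝ := fun s => R s * U s
      let ℓ : Matrix (Fin n) (Fin n) ℝ := matDeriv F t * (F t)⁻¹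
      let r : Matrix (Fin n) (Fin n) ℝ := matDeriv U t * (U t)⁻¹
      let h : ℝ → Matrix (Fin n) (Fin n) ℝ := fun s => R s * H s * (R s)ᵀ
      matDeriv h t - h t * ℓᵀ - ℓ * h t =
        R t * (matDeriv H t - H t * rᵀ - r * H t) * (R t)ᵀ := by
  intro t F ℓ r h
  -- differentiability of entries of products
  have hRH : ∀ i j, DifferentiableAt ℝ (fun s => (R s * H s) i j) t := by
    intro i j
    have : (fun s => (R s * H s) i j) = fun s => ∑ k, R s i k * H s k j := by
      funext s; simp [Matrix.mul_apply]
    rw [this]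
    exact DifferentiableAt.fun_sum (fun k _ => ((hR t i k).fun_mul (hH t k j)))
  have hRT : ∀ i j, DifferentiableAt ℝ (fun s => (R s)ᵀ i j) t := fun i j => hR t j i
  have hFd : matDeriv F t = matDeriv R t * U t + R t * matDeriv U t :=
    matDeriv_mul R U t (hR t) (hU t)
  have hhd : matDeriv h t = (matDeriv R t * H t + R t * matDeriv H t) * (R t)ᵀ
      + (R t * H t) * (matDeriv R t)ᵀ := by
    have := matDeriv_mul (fun s => R s * H s) (fun s => (R s)ᵀ) t hRH hRT
    rw [show h = fun s => (R s * H s) * (R s)ᵀ from rfl, this,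
      matDeriv_mul R H t (hR t) (hH t), matDeriv_transpose]
  -- inverses
  have hRinv : (R t)⁻¹ = (R t)ᵀ := Matrix.inv_eq_right_inv (horth t)
  have hRo : (R t)ᵀ * R t = 1 := mul_eq_one_comm.mp (horth t)
  have hUdet : IsUnit (U t).det := (Matrix.isUnit_iff_isUnit_det (U t)).mp (hinv t)
  have hU1 : U t * (U t)⁻¹ = 1 := Matrix.mul_nonsing_inv (U t) hUdet
  have hFinv : (F t)⁻¹ = (U t)⁻¹ * (R t)ᵀ := by
    show (R t * U t)⁻¹ = _
    rw [Matrix.mul_inv_rev, hRinv]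
  show matDeriv h t - h t * ℓᵀ - ℓ * h t = _
  have hℓ : ℓ = (matDeriv R t * U t + R t * matDeriv U t) * ((U t)⁻¹ * (R t)ᵀ) := by
    show matDeriv F t * (F t)⁻¹ = _
    rw [hFd, hFinv]
  rw [hhd, hℓ]
  have := key_alg (R t) (matDeriv R t) (U t) (matDeriv U t) (H t) (matDeriv H t)
    ((U t)⁻¹) hRo hU1
  calc (matDeriv R t * H t + R t * matDeriv H t) * (R t)ᵀ + R t * H t * (matDeriv R t)ᵀ
        - R t * H t * (R t)ᵀ * ((matDeriv R t * U t + R t * matDeriv U t) * ((U t)⁻¹ * (R t)ᵀ))ᵀ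
        - (matDeriv R t * U t + R t * matDeriv U t) * ((U t)⁻¹ * (R t)ᵀ) * (R t * H t * (R t)ᵀ)
      = (matDeriv R t * H t * (R t)ᵀ + (R t * matDeriv H t * (R t)ᵀ + R t * H t * (matDeriv R t)ᵀ))
        - R t * H t * (R t)ᵀ * ((matDeriv R t * U t + R t * matDeriv U t) * ((U t)⁻¹ * (R t)ᵀ))ᵀ
        - (matDeriv R t * U t + R t * matDeriv U t) * ((U t)⁻¹ * (R t)ᵀ) * (R t * H t * (R t)ᵀ) := by
        rw [Matrix.add_mul]; abel_nf
    _ = R t * (matDeriv H t - H t * (matDeriv U t * (U t)⁻¹)ᵀ - (matDeriv U t * (U t)⁻¹) * H t) * (R t)ᵀ := this
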